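/- Let g, m be positive integers and let B(g,m) be the set of numerical semigroups S with genus g, multiplicity m, and F(S) < 2m. The map sending a subset B ⊆ {1,...,m-1} of size 2m - g - 2 to S_{m,B} = (m + B) ∪ {0, m} ∪ {n : n ≥ 2m} is a bijection from such subsets to B(g,m). -/

import Mathlib

/-- A numerical semigroup: a subset of ℕ containing 0, closed under addition,
with finite complement. -/
def IsNumericalSemigroup (S : Set ℕ) : Prop :=
  0 ∈ S ∧ (∀ a ∈ S, ∀ b ∈ S, a + b ∈ S) ∧ Sᶜ.Finite

/-- The genus: number of gaps. -/
noncomputable def genus (S : Set ℕ) : ℕ := Sᶜ.ncard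

/-- The Frobenius number: the largest gap. -/
noncomputable def frob (S : Set ℕ) : ℕ := sSup Sᶜ

/-- `elt S k` is the k-th smallest nonzero element of `S` (1-indexed). -/
noncomputable def elt (S : Set ℕ) (k : ℕ) : ℕ :=
  Nat.nth (fun n => n ∈ S ∧ n ≠ 0) (k - 1)

/-- The multiplicity: the smallest nonzero element. -/
noncomputable def mult (S : Set ℕ) : ℕ := elt S 1

def sgp (m : ℕ) (B : Finset ℕ) : Set ℕ :=
  (fun b => m + b) '' (↑B) ∪ ({0, m} : Set ℕ) ∪ {n | 2 * m ≤ n}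

lemma mem_sgp {m : ℕ} {B : Finset ℕ} {n : ℕ} :
    n ∈ sgp m B ↔ (∃ b ∈ B, m + b = n) ∨ n = 0 ∨ n = m ∨ 2 * m ≤ n := by
  simp only [sgp, Set.mem_union, Set.mem_image, Set.mem_insert_iff, Set.mem_singleton_iff,
    Set.mem_setOf_eq, Finset.mem_coe]
  constructor
  · rintro ((⟨b, hb, rfl⟩ | h | h) | h)
    · exact Or.inl ⟨b, hb, rfl⟩
    · exact Or.inr (Or.inl h)
    · exact Or.inr (Or.inr (Or.inl h))
    · exact Or.inr (Or.inr (Or.inr h))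
  · rintro (⟨b, hb, rfl⟩ | h | h | h)
    · exact Or.inl (Or.inl ⟨b, hb, rfl⟩)
    · exact Or.inl (Or.inr (Or.inl h))
    · exact Or.inl (Or.inr (Or.inr h))
    · exact Or.inr h

lemma mult_eq (S : Set ℕ) : mult S = sInf {n | n ∈ S ∧ n ≠ 0} := by
  simp [mult, elt, Nat.nth_zero]

lemma compl_sgp {m : ℕ} {B : Finset ℕ} (hB : ↑B ⊆ Set.Icc 1 (m-1)) (hm : 1 ≤ m) :
    (sgp m B)ᶜ = Set.Icc 1 (m-1) ∪ (fun b => m + b) '' (Set.Icc 1 (m-1) \ ↑B) := by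
  have hBb : ∀ b ∈ B, 1 ≤ b ∧ b ≤ m - 1 := fun b hb => hB hb
  ext n
  simp only [Set.mem_compl_iff, mem_sgp, Set.mem_union, Set.mem_Icc, Set.mem_image,
    Set.mem_diff, Finset.mem_coe]
  push_neg
  constructor
  · rintro ⟨h1, h2, h3, h4⟩
    by_cases hn : n ≤ m - 1
    · exact Or.inl ⟨by omega, hn⟩
    · refine Or.inr ⟨n - m, ⟨⟨by omega, by omega⟩, fun hb => ?_⟩, by omega⟩
      exact absurd (by omega : m + (n - m) = n) (h1 _ hb)
  · rintro (⟨h1, h2⟩ | ⟨b, ⟨⟨hb1, hb2⟩, hbB⟩, rfl⟩)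
    · refine ⟨fun c hc hcn => ?_, by omega, by omega, by omega⟩
      have := hBb c hc; omega
    · refine ⟨fun c hc hcn => ?_, by omega, by omega, by omega⟩
      have := hBb c hc
      have hcb : c = b := by omega
      exact hbB (hcb ▸ hc)

lemma compl_sgp_finite {m : ℕ} {B : Finset ℕ} (hB : ↑B ⊆ Set.Icc 1 (m-1)) (hm : 1 ≤ m) :
    ((sgp m B)ᶜ).Finite := by
  rw [compl_sgp hB hm]
  exact (Set.finite_Icc _ _).union (((Set.finite_Icc _ _).diff).image _)

lemma card_le_aux {m : ℕ} {B : Finset ℕ} (hB : ↑B ⊆ Set.Icc 1 (m-1)) : B.card ≤ m - 1 := by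
  have := Finset.card_le_card (t := Finset.Icc 1 (m-1)) (fun b hb => by
    have := hB hb; simpa [Finset.mem_Icc] using this)
  simpa [Nat.card_Icc] using this

lemma genus_sgp {m : ℕ} {B : Finset ℕ} (hB : ↑B ⊆ Set.Icc 1 (m-1)) (hm : 1 ≤ m) :
    genus (sgp m B) + B.card + 2 = 2 * m := by
  have hcard : B.card ≤ m - 1 := card_le_aux hB
  have hdisj : Disjoint (Set.Icc 1 (m-1)) ((fun b => m + b) '' (Set.Icc 1 (m-1) \ ↑B)) := by
    rw [Set.disjoint_left]
    rintro n ⟨h1, h2⟩ ⟨b, ⟨⟨hb1, _⟩, _⟩, hbn⟩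
    dsimp only at hbn
    omega
  have hinj : Function.Injective (fun b : ℕ => m + b) := fun a b h => by simpa using h
  rw [genus, compl_sgp hB hm,
    Set.ncard_union_eq hdisj (Set.finite_Icc _ _) (((Set.finite_Icc _ _).diff).image _),
    Set.ncard_image_of_injective _ hinj,
    Set.ncard_diff (by simpa using hB) B.finite_toSet]
  rw [← Finset.coe_Icc, Set.ncard_coe_finset, Set.ncard_coe_finset, Nat.card_Icc]
  omega

lemma isNS_sgp {m : ℕ} {B : Finset ℕ} (hB : ↑B ⊆ Set.Icc 1 (m-1)) (hm : 1 ≤ m) :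
    IsNumericalSemigroup (sgp m B) := by
  refine ⟨mem_sgp.2 (by omega), ?_, compl_sgp_finite hB hm⟩
  intro a ha b hb
  have key : ∀ n, n ∈ sgp m B → n = 0 ∨ m ≤ n := by
    intro n hn
    rcases mem_sgp.1 hn with ⟨c, _, rfl⟩ | h | h | h <;> omega
  rcases key a ha with rfl | ha' 
  · simpa using hb
  rcases key b hb with rfl | hb'
  · simpa using ha
  exact mem_sgp.2 (by omega)

lemma mult_sgp {m : ℕ} {B : Finset ℕ} (hm : 1 ≤ m) : mult (sgp m B) = m := by
  rw [mult_eq]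
  have hmem : m ∈ {n | n ∈ sgp m B ∧ n ≠ 0} := ⟨mem_sgp.2 (by omega), by omega⟩
  refine le_antisymm (Nat.sInf_le hmem) (le_csInf ⟨m, hmem⟩ ?_)
  rintro n ⟨hn, hn0⟩
  rcases mem_sgp.1 hn with ⟨c, _, rfl⟩ | h | h | h <;> omega

lemma frob_sgp {m : ℕ} {B : Finset ℕ} (hB : ↑B ⊆ Set.Icc 1 (m-1)) (hm2 : 2 ≤ m) :
    frob (sgp m B) < 2 * m := by
  have hne : ((sgp m B)ᶜ).Nonempty := by
    refine ⟨1, ?_⟩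
    simp only [Set.mem_compl_iff, mem_sgp]
    push_neg
    refine ⟨fun c hc => ?_, by omega, by omega, by omega⟩
    have := hB hc; simp only [Set.mem_Icc] at this; omega
  have hlt : ∀ n ∈ (sgp m B)ᶜ, n < 2 * m := by
    rw [compl_sgp hB (by omega)]
    rintro n (h | ⟨b, ⟨⟨_, hb2⟩, _⟩, hbn⟩)
    · simp only [Set.mem_Icc] at h; omega
    · dsimp only at hbn; omega
  exact hlt _ (Nat.sSup_mem hne (compl_sgp_finite hB (by omega)).bddAbove)

theorem stmt3 (g m : ℕ) (hg : 0 < g) (hm : 0 < m) :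
    Set.BijOn
      (fun B : Finset ℕ => (fun b => m + b) '' (↑B) ∪ ({0, m} : Set ℕ) ∪ {n | 2 * m ≤ n})
      {B : Finset ℕ | ↑B ⊆ Set.Icc 1 (m - 1) ∧ B.card + g + 2 = 2 * m}
      {S : Set ℕ | IsNumericalSemigroup S ∧ genus S = g ∧ mult S = m ∧ frob S < 2 * m} := by
  classical
  have hfs : ∀ B : Finset ℕ, (fun B : Finset ℕ => (fun b => m + b) '' (↑B) ∪ ({0, m} : Set ℕ) ∪ {n | 2 * m ≤ n}) B = sgp m B := fun B => rfl
  refine ⟨?_, ?_, ?_⟩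
  · -- MapsTo
    rintro B ⟨hB, hcard⟩
    have hm2 : 2 ≤ m := by have := card_le_aux hB; omega
    have hgen := genus_sgp hB hm
    show sgp m B ∈ {S : Set ℕ | IsNumericalSemigroup S ∧ genus S = g ∧ mult S = m ∧ frob S < 2 * m}
    exact ⟨isNS_sgp hB hm, by omega, mult_sgp hm, frob_sgp hB hm2⟩
  · -- InjOn
    have key : ∀ B B' : Finset ℕ, ↑B ⊆ Set.Icc 1 (m-1) → ↑B' ⊆ Set.Icc 1 (m-1) →
        sgp m B ⊆ sgp m B' → B ⊆ B' := by
      intro B B' hB hB' hsub b hb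
      have hbI := hB hb
      simp only [Set.mem_Icc] at hbI
      have : m + b ∈ sgp m B' := hsub (mem_sgp.2 (Or.inl ⟨b, hb, rfl⟩))
      rcases mem_sgp.1 this with ⟨c, hc, hcb⟩ | h | h | h
      · have : c = b := by omega
        exact this ▸ hc
      all_goals omega
    rintro B ⟨hB, _⟩ B' ⟨hB', _⟩ heq
    rw [hfs, hfs] at heq
    exact Finset.Subset.antisymm (key B B' hB hB' heq.le) (key B' B hB' hB heq.ge)
  · -- SurjOn
    rintro S ⟨⟨h0, hadd, hfin⟩, hgen, hmult, hfrob⟩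
    set B : Finset ℕ := (Finset.Icc 1 (m-1)).filter (fun b => m + b ∈ S) with hBdef
    have hB : ↑B ⊆ Set.Icc 1 (m-1) := by
      intro b hb
      simp only [hBdef, Finset.coe_filter, Set.mem_setOf_eq, Finset.mem_Icc] at hb
      simpa [Set.mem_Icc] using hb.1
    -- m ∈ S and minimality
    rw [mult_eq] at hmult
    have hne : {n | n ∈ S ∧ n ≠ 0}.Nonempty := by
      by_contra h
      rw [Set.not_nonempty_iff_eq_empty] at h
      rw [h] at hmult
      simp [Nat.sInf_empty] at hmult
      omega
    have hmS : m ∈ S := (hmult ▸ Nat.sInf_mem hne).1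
    have hmin : ∀ n ∈ S, n ≠ 0 → m ≤ n := fun n hn hn0 => hmult ▸ Nat.sInf_le ⟨hn, hn0⟩
    have hbig : ∀ n, 2 * m ≤ n → n ∈ S := by
      intro n hn
      by_contra hns
      have : n ≤ frob S := le_csSup hfin.bddAbove hns
      omega
    have hSeq : S = sgp m B := by
      ext n
      rw [mem_sgp]
      constructor
      · intro hn
        rcases Nat.lt_or_ge n (2*m) with h2 | h2
        · by_cases hn0 : n = 0
          · tauto
          by_cases hnm : n = m
          · tauto
          have hge : m ≤ n := hmin n hn hn0
          refine Or.inl ⟨n - m, ?_, by omega⟩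
          simp only [hBdef, Finset.mem_filter, Finset.mem_Icc]
          exact ⟨⟨by omega, by omega⟩, by rwa [(by omega : m + (n - m) = n)]⟩
        · tauto
      · rintro (⟨b, hb, rfl⟩ | rfl | rfl | h)
        · simp only [hBdef, Finset.mem_filter] at hb
          exact hb.2
        · exact h0
        · exact hmS
        · exact hbig n h
    have hm2 : 1 ≤ m := hm
    have hgB := genus_sgp hB hm2
    rw [← hSeq, hgen] at hgB
    exact ⟨B, ⟨hB, by omega⟩, by rw [hfs, ← hSeq]⟩
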